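/- arXiv:1502.01427 — 4 statements merged into one kernel-verified Lean document; each statement's English description precedes it below -/
import Mathlib

section
/- For positive integers n and 1 ≤ j ≤ n, the product of one-dimensional sine-power integrals satisfies Π_{j=1}^{n} ∫_0^π (sin θ)^{2n+1-j} dθ = π^{⌈n/2⌉} 2^{⌊n/2⌋} (n!!)/(2n)!!. -/
open Real Finset intervalIntegral

open Nat in
lemma prod_odd_over_even (k : ℕ) :
    ∏ i ∈ range k, (2 * (i : ℝ) + 1) / (2 * i + 2) =
      ((2 * k - 1)‼ : ℝ) / ((2 * k)‼ : ℝ) := by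
  induction k with
  | zero => simp
  | succ k ih =>
      rw [prod_range_succ, ih]
      have h1 : (2 * (k + 1))‼ = (2 * k + 2) * (2 * k)‼ := by
        have : 2 * (k + 1) = 2 * k + 2 := by ring
        rw [this, doubleFactorial_add_two]
      have h2 : (2 * (k + 1) - 1)‼ = (2 * k + 1) * (2 * k - 1)‼ := by
        cases k with
        | zero => decide
        | succ m =>
            have e1 : 2 * (m + 1 + 1) - 1 = (2 * m + 1) + 2 := by omega
            have e2 : 2 * (m + 1) - 1 = 2 * m + 1 := by omega
            rw [e1, e2, doubleFactorial_add_two]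
            ring_nf
      rw [h1, h2]
      have hne1 : ((2 * k)‼ : ℝ) ≠ 0 := Nat.cast_ne_zero.2 (Nat.doubleFactorial_pos _).ne'
      have hne2 : (2 * (k : ℝ) + 2) ≠ 0 := by positivity
      push_cast
      field_simp

open Nat in
lemma prod_even_over_odd (k : ℕ) :
    ∏ i ∈ range k, (2 * (i : ℝ) + 2) / (2 * i + 3) =
      ((2 * k)‼ : ℝ) / ((2 * k + 1)‼ : ℝ) := by
  induction k with
  | zero => simp
  | succ k ih =>
      rw [prod_range_succ, ih]
      have h1 : (2 * (k + 1))‼ = (2 * k + 2) * (2 * k)‼ := by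
        have : 2 * (k + 1) = 2 * k + 2 := by ring
        rw [this, doubleFactorial_add_two]
      have h2 : (2 * (k + 1) + 1)‼ = (2 * k + 3) * (2 * k + 1)‼ := by
        have : 2 * (k + 1) + 1 = (2 * k + 1) + 2 := by ring
        rw [this, doubleFactorial_add_two]
      rw [h1, h2]
      have hne1 : ((2 * k + 1)‼ : ℝ) ≠ 0 := Nat.cast_ne_zero.2 (Nat.doubleFactorial_pos _).ne'
      have hne2 : (2 * (k : ℝ) + 3) ≠ 0 := by positivity
      push_cast
      field_simp

noncomputable def dpar (m : ℕ) : ℝ := if Even m then π else 2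

open Nat in
lemma integral_sin_pow_eq (m : ℕ) :
    (∫ θ in (0:ℝ)..π, (sin θ) ^ m) = dpar m * ((m - 1)‼ : ℝ) / (m‼ : ℝ) := by
  rcases Nat.even_or_odd m with ⟨k, hk⟩ | ⟨k, hk⟩
  · have hm : m = 2 * k := by omega
    subst hm
    rw [integral_sin_pow_even, prod_odd_over_even, dpar, if_pos ⟨k, by ring⟩]
    ring
  · have hm : m = 2 * k + 1 := by omega
    subst hm
    have hodd : ¬ Even (2 * k + 1) := by simp [Nat.even_add_one, Nat.even_mul]
    rw [integral_sin_pow_odd, prod_even_over_odd, dpar, if_neg hodd]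
    have : 2 * k + 1 - 1 = 2 * k := by omega
    rw [this]
    ring

lemma Dprod (N : ℕ) : ∏ i ∈ range N, dpar i = π ^ ((N + 1) / 2) * 2 ^ (N / 2) := by
  induction N with
  | zero => simp
  | succ N ih =>
      rw [prod_range_succ, ih]
      rcases Nat.even_or_odd N with ⟨k, hk⟩ | ⟨k, hk⟩
      · have hN : N = 2 * k := by omega
        subst hN
        rw [dpar, if_pos ⟨k, by ring⟩]
        have e1 : (2 * k + 1) / 2 = k := by omega
        have e2 : 2 * k / 2 = k := by omega
        have e3 : (2 * k + 1 + 1) / 2 = k + 1 := by omega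
        have e4 : (2 * k + 1) / 2 = k := by omega
        simp only [e1, e2, e3, e4]
        ring
      · have hN : N = 2 * k + 1 := by omega
        subst hN
        have hodd : ¬ Even (2 * k + 1) := by simp [Nat.even_add_one, Nat.even_mul]
        rw [dpar, if_neg hodd]
        have e1 : (2 * k + 1 + 1) / 2 = k + 1 := by omega
        have e2 : (2 * k + 1) / 2 = k := by omega
        have e3 : (2 * k + 1 + 1 + 1) / 2 = k + 1 := by omega
        have e4 : (2 * k + 1 + 1) / 2 = k + 1 := by omega
        simp only [e1, e2, e3, e4]
        ring

open Nat in
lemma tel (a : ℕ) : ∀ k : ℕ, ∏ m ∈ Ico (a + 1) (a + 1 + k), ((m - 1)‼ : ℝ) / (m‼ : ℝ)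
    = (a‼ : ℝ) / ((a + k)‼ : ℝ) := by
  intro k
  induction k with
  | zero =>
      have hne : ((a‼ : ℝ)) ≠ 0 := Nat.cast_ne_zero.2 (Nat.doubleFactorial_pos _).ne'
      simp [div_self hne]
  | succ k ih =>
      have h : a + 1 + (k + 1) = (a + 1 + k) + 1 := by ring
      rw [h, Finset.prod_Ico_succ_top (by omega), ih]
      have e : a + 1 + k - 1 = a + k := by omega
      rw [e]
      have hne1 : ((a + k)‼ : ℝ) ≠ 0 := Nat.cast_ne_zero.2 (Nat.doubleFactorial_pos _).ne'
      have hne2 : ((a + 1 + k)‼ : ℝ) ≠ 0 := Nat.cast_ne_zero.2 (Nat.doubleFactorial_pos _).ne'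
      have e2 : a + (k + 1) = a + 1 + k := by ring
      rw [e2]
      field_simp

/-- `∏_{j=1}^{n} ∫_0^π (sin θ)^{2n+1-j} dθ = π^{⌈n/2⌉} 2^{⌊n/2⌋} n‼/(2n)‼`. -/
theorem sine_power_integral_product (n : ℕ) (hn : 1 ≤ n) :
    ∏ j ∈ Finset.Icc 1 n, ∫ θ in (0:ℝ)..π, (sin θ) ^ (2 * n + 1 - j) =
      π ^ ((n + 1) / 2) * 2 ^ (n / 2) *
        (Nat.doubleFactorial n : ℝ) / (Nat.doubleFactorial (2 * n) : ℝ) := by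
  have hre : ∏ j ∈ Finset.Icc 1 n, (∫ θ in (0:ℝ)..π, (sin θ) ^ (2 * n + 1 - j)) =
      ∏ m ∈ Finset.Icc (n + 1) (2 * n), ∫ θ in (0:ℝ)..π, (sin θ) ^ m := by
    apply Finset.prod_nbij' (fun j => 2 * n + 1 - j) (fun m => 2 * n + 1 - m)
    · intro a ha; simp only [Finset.mem_Icc] at *; omega
    · intro a ha; simp only [Finset.mem_Icc] at *; omega
    · intro a ha; simp only [Finset.mem_Icc] at ha; omega
    · intro a ha; simp only [Finset.mem_Icc] at ha; omega
    · intro a ha; rfl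
  rw [hre]
  have hsub : ∀ m ∈ Finset.Icc (n + 1) (2 * n),
      (∫ θ in (0:ℝ)..π, (sin θ) ^ m) =
        dpar m * ((Nat.doubleFactorial (m - 1) : ℝ) / (Nat.doubleFactorial m : ℝ)) := by
    intro m _; rw [integral_sin_pow_eq]; ring
  rw [Finset.prod_congr rfl hsub, Finset.prod_mul_distrib]
  have hIcc : Finset.Icc (n + 1) (2 * n) = Finset.Ico (n + 1) (n + 1 + n) := by
    ext x
    simp only [Finset.mem_Icc, Finset.mem_Ico]
    omega
  rw [hIcc, tel]
  have hD : ∏ m ∈ Finset.Ico (n + 1) (n + 1 + n), dpar m =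
      π ^ ((n + 1) / 2) * 2 ^ (n / 2) := by
    have h1 : ∏ m ∈ Finset.range (n + 1 + n), dpar m =
        (∏ m ∈ Finset.range (n + 1), dpar m) * ∏ m ∈ Finset.Ico (n + 1) (n + 1 + n), dpar m := by
      rw [Finset.prod_range_mul_prod_Ico _ (by omega)]
    rw [Dprod, Dprod] at h1
    have hπ : (0:ℝ) < π := pi_pos
    have e1 : (n + 1 + n + 1) / 2 = (n + 2) / 2 + (n + 1) / 2 := by omega
    have e2 : (n + 1 + n) / 2 = (n + 1) / 2 + n / 2 := by omega
    rw [e1, e2, pow_add, pow_add] at h1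
    have h2 : π ^ ((n + 2) / 2) * π ^ ((n + 1) / 2) * (2 ^ ((n + 1) / 2) * 2 ^ (n / 2) : ℝ)
        = (π ^ ((n + 1 + 1) / 2) * 2 ^ ((n + 1) / 2)) *
          (π ^ ((n + 1) / 2) * 2 ^ (n / 2)) := by ring
    rw [h2] at h1
    have hne : (π ^ ((n + 1 + 1) / 2) * 2 ^ ((n + 1) / 2) : ℝ) ≠ 0 := by positivity
    exact (mul_left_cancel₀ hne h1).symm
  rw [hD]
  have e3 : n + 1 + n - 1 = 2 * n := by omega
  rw [show n + n = 2 * n by ring]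
  ring
end

section
/- Let C be the 2(n+1)×2(n+1) symmetric block matrix C = [[A₊, Bᵀ],[B, A₋]], where A₊ and A₋ are the (n+1)×(n+1) matrices whose only nonzero entries are: (1,1)-entry α, (n+1,n+1)-entry γ, (i,i) = β for 2 ≤ i ≤ n, and (1,n+1) = (n+1,1) = ±δ; and B has (1,1)-entry μ, (n+1,n+1)-entry τ, (i,i) = η for 2 ≤ i ≤ n, (1,n+1)-entry ν, and (n+1,1)-entry −ν. Then det(C) = (β²−η²)^{n-1} · (αγ − ατ − δ² − 2δν + γμ − μτ − ν²) · (αγ + ατ − δ² + 2δν − γμ − μτ − ν²). -/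
open Matrix

private def midIdx (m : ℕ) (k : Fin m) : Fin (m + 2) := ⟨k + 1, by omega⟩

private def idxMap (m : ℕ) : Fin 4 ⊕ (Fin 2 × Fin m) → Fin (m + 2) ⊕ Fin (m + 2) :=
  Sum.elim
    (![Sum.inl 0, Sum.inl (Fin.last (m + 1)), Sum.inr 0, Sum.inr (Fin.last (m + 1))])
    (fun p => if p.1 = 0 then Sum.inl (midIdx m p.2) else Sum.inr (midIdx m p.2))

private lemma idxMap_injective (m : ℕ) : Function.Injective (idxMap m) := by
  intro a b h
  rcases a with a | ⟨s, k⟩ <;> rcases b with b | ⟨t, l⟩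
  · fin_cases a <;> fin_cases b <;>
      simp_all [idxMap, midIdx, Fin.ext_iff, Fin.last, -Fin.val_eq_zero_iff]
  · fin_cases a <;> fin_cases t <;>
      simp_all [idxMap, midIdx, Fin.ext_iff, Fin.last, -Fin.val_eq_zero_iff] <;> omega
  · fin_cases b <;> fin_cases s <;>
      simp_all [idxMap, midIdx, Fin.ext_iff, Fin.last, -Fin.val_eq_zero_iff] <;> omega
  · fin_cases s <;> fin_cases t <;>
      simp_all [idxMap, midIdx, Fin.ext_iff, Prod.ext_iff, -Fin.val_eq_zero_iff]


private noncomputable def idxEquiv (m : ℕ) : Fin 4 ⊕ (Fin 2 × Fin m) ≃ Fin (m + 2) ⊕ Fin (m + 2) :=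
  Equiv.ofBijective (idxMap m)
    ((Fintype.bijective_iff_injective_and_card _).2 ⟨idxMap_injective m, by simp; ring⟩)


private lemma idxEquiv_apply (m : ℕ) (x) : idxEquiv m x = idxMap m x := rfl
set_option maxHeartbeats 1000000 in
/-- Determinant of the structured `2(n+1) × 2(n+1)` covariance-type block matrix
`C = [[A₊, Bᵀ],[B, A₋]]`. -/
theorem structured_block_det (n : ℕ) (hn : 1 ≤ n) (α β γ δ μ ν η τ : ℝ)
    (Aplus Aminus B : Matrix (Fin (n + 1)) (Fin (n + 1)) ℝ)
    (hAplus : Aplus = fun i j =>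
      if i = j then (if i = 0 then α else if i = Fin.last n then γ else β)
      else if (i = 0 ∧ j = Fin.last n) ∨ (i = Fin.last n ∧ j = 0) then δ else 0)
    (hAminus : Aminus = fun i j =>
      if i = j then (if i = 0 then α else if i = Fin.last n then γ else β)
      else if (i = 0 ∧ j = Fin.last n) ∨ (i = Fin.last n ∧ j = 0) then -δ else 0)
    (hB : B = fun i j =>
      if i = j then (if i = 0 then μ else if i = Fin.last n then τ else η)
      else if i = 0 ∧ j = Fin.last n then ν
      else if i = Fin.last n ∧ j = 0 then -ν else 0) :
    (Matrix.fromBlocks Aplus Bᵀ B Aminus).det =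
      (β ^ 2 - η ^ 2) ^ (n - 1) *
        (α * γ - α * τ - δ ^ 2 - 2 * δ * ν + γ * μ - μ * τ - ν ^ 2) *
        (α * γ + α * τ - δ ^ 2 + 2 * δ * ν - γ * μ - μ * τ - ν ^ 2) := by
  obtain ⟨m, rfl⟩ : ∃ m, n = m + 1 := ⟨n - 1, by omega⟩
  set D : Matrix (Fin 4) (Fin 4) ℝ :=
    !![α, δ, μ, -ν; δ, γ, ν, τ; μ, ν, α, -δ; -ν, τ, -δ, γ] with hD
  set K : Matrix (Fin 2) (Fin 2) ℝ := !![β, η; η, β] with hK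
  have key : (Matrix.fromBlocks Aplus Bᵀ B Aminus).submatrix (idxEquiv m) (idxEquiv m) =
      Matrix.fromBlocks D 0 0 (Matrix.blockDiagonal fun _ : Fin m => K) := by
    ext a b
    rcases a with a | ⟨s, k⟩ <;> rcases b with b | ⟨t, l⟩
    · fin_cases a <;> fin_cases b <;>
        simp [hAplus, hAminus, hB, idxEquiv_apply, idxMap, midIdx, hD, hK,
          Matrix.fromBlocks, Fin.ext_iff, Fin.last, Matrix.transpose, -Fin.val_eq_zero_iff]
    · fin_cases a <;> fin_cases t <;>
        simp [hAplus, hAminus, hB, idxEquiv_apply, idxMap, midIdx, hD, hK,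
          Matrix.fromBlocks, Fin.ext_iff, Fin.last, Matrix.transpose, -Fin.val_eq_zero_iff] <;> omega
    · fin_cases b <;> fin_cases s <;>
        simp [hAplus, hAminus, hB, idxEquiv_apply, idxMap, midIdx, hD, hK,
          Matrix.fromBlocks, Fin.ext_iff, Fin.last, Matrix.transpose, -Fin.val_eq_zero_iff] <;> omega
    · fin_cases s <;> fin_cases t <;>
        simp [hAplus, hAminus, hB, idxEquiv_apply, idxMap, midIdx, hD, hK,
          Matrix.fromBlocks, Matrix.blockDiagonal, Fin.ext_iff, Fin.last, Matrix.transpose, -Fin.val_eq_zero_iff] <;>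
        split_ifs <;> simp_all <;> omega
  rw [← Matrix.det_submatrix_equiv_self (idxEquiv m) (Matrix.fromBlocks Aplus Bᵀ B Aminus),
    key, Matrix.det_fromBlocks_zero₂₁, Matrix.det_blockDiagonal]
  have hDdet : D.det =
      (α * γ - α * τ - δ ^ 2 - 2 * δ * ν + γ * μ - μ * τ - ν ^ 2) *
      (α * γ + α * τ - δ ^ 2 + 2 * δ * ν - γ * μ - μ * τ - ν ^ 2) := by
    simp (config := {decide := true}) [hD, Matrix.det_succ_row_zero, Fin.sum_univ_succ, Fin.succAbove]
    ring
  have hKdet : K.det = β ^ 2 - η ^ 2 := by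
    simp [hK, Matrix.det_fin_two_of]; ring
  rw [hDdet, hKdet]
  simp
  ring
end

section
/- For all r > 0, the quantity (e^r − e^{2r})(r² + 3) + e^{3r} − 1 is strictly positive. -/
open Real

/-- For all `r > 0`, `(e^r − e^{2r})(r² + 3) + e^{3r} − 1 > 0`. -/
theorem block_det_pos (r : ℝ) (hr : 0 < r) :
    0 < (exp r - exp (2 * r)) * (r ^ 2 + 3) + exp (3 * r) - 1 := by
  have key : 1 + r + r ^ 2 / 2 + r ^ 3 / 6 + r ^ 4 / 24 ≤ exp r := by
    have := Real.sum_le_exp_of_nonneg hr.le 5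
    simp [Finset.sum_range_succ, Nat.factorial] at this
    nlinarith [this]
  have h1 : (1 : ℝ) < exp r := by nlinarith [key, hr, pow_pos hr 2, pow_pos hr 3, pow_pos hr 4]
  have h2 : exp (2 * r) = exp r ^ 2 := by rw [← Real.exp_nat_mul]; norm_num
  have h3 : exp (3 * r) = exp r ^ 3 := by rw [← Real.exp_nat_mul]; norm_num
  set A := exp r with hA
  rw [h2, h3]
  have hfac : (A - exp r ^ 2) * (r ^ 2 + 3) + exp r ^ 3 - 1
      = (A - 1) * ((A - 1) ^ 2 - A * r ^ 2) := by ring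
  have hq : 0 < (A - 1) ^ 2 - A * r ^ 2 := by
    have hL : (0:ℝ) ≤ A - (1 + r + r ^ 2 / 2 + r ^ 3 / 6 + r ^ 4 / 24) := by linarith
    have hS : (0:ℝ) ≤ A + (1 + r + r ^ 2 / 2 + r ^ 3 / 6 + r ^ 4 / 24) - 2 - r ^ 2 := by
      nlinarith [pow_pos hr 3, pow_pos hr 4]
    nlinarith [mul_nonneg hL hS, pow_pos hr 4, pow_pos hr 5, pow_pos hr 6, pow_pos hr 7, pow_pos hr 8]
  have := mul_pos (show (0:ℝ) < A - 1 by linarith) hq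
  nlinarith [this]
end

section
/- For any positive definite m·n² × m·n² matrix A, the map B ↦ ∫_{R^{mn²}} Π_{i=1}^m |det ξ^i| e^{-(Bu,u)/2} du is Hölder continuous of exponent 1/2 at A: for all B sufficiently close to A, |∫ Π|det ξ^i| e^{-(Bu,u)/2} du − ∫ Π|det ξ^i| e^{-(Au,u)/2} du| = O(||A − B||_∞^{1/2}), where ||·||_∞ denotes the maximum absolute value of the entries. -/
open Real MeasureTheory Matrix

private lemma krih_exp_diff {a x y : ℝ} (hx : a ≤ x) (hy : a ≤ y) :
    |Real.exp (-x) - Real.exp (-y)| ≤ |x - y| * Real.exp (-a) := by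
  wlog h : y ≤ x generalizing x y
  · rw [abs_sub_comm, abs_sub_comm x y]; exact this hy hx (le_of_not_ge h)
  have h3 : Real.exp (-x) = Real.exp (-y) * Real.exp (y - x) := by
    rw [← Real.exp_add]; ring_nf
  have h4 : Real.exp (-y) ≤ Real.exp (-a) := Real.exp_le_exp.2 (by linarith)
  have h5 : Real.exp (-x) ≤ Real.exp (-y) := Real.exp_le_exp.2 (by linarith)
  rw [abs_of_nonpos (by linarith), abs_of_nonneg (by linarith)]
  have h6 : 1 - Real.exp (y - x) ≤ x - y := by
    have := Real.add_one_le_exp (y - x); linarith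
  have h7 : Real.exp (-y) * (1 - Real.exp (y - x)) ≤ Real.exp (-y) * (x - y) :=
    mul_le_mul_of_nonneg_left h6 (Real.exp_pos _).le
  have h8 : Real.exp (-y) * (x - y) ≤ Real.exp (-a) * (x - y) :=
    mul_le_mul_of_nonneg_right h4 (by linarith)
  nlinarith

private lemma krih_pow_le (k : ℕ) {b t : ℝ} (hb : 0 < b) (ht : 0 ≤ t) :
    t ^ k ≤ (1 + k.factorial * b⁻¹ ^ k) * Real.exp (b * t ^ 2) := by
  have hexp1 : (1 : ℝ) ≤ Real.exp (b * t ^ 2) := Real.one_le_exp (by positivity)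
  have h0 : t ^ k ≤ 1 + (t ^ 2) ^ k := by
    rcases le_total t 1 with h | h
    · have h1 : t ^ k ≤ 1 := pow_le_one₀ ht h
      have h2 : (0:ℝ) ≤ (t ^ 2) ^ k := by positivity
      linarith
    · have h1 : t ^ k ≤ (t ^ 2) ^ k := by
        rw [← pow_mul]
        exact pow_le_pow_right₀ h (Nat.le_mul_of_pos_left k (by norm_num))
      linarith
  have h2 : (t ^ 2) ^ k ≤ k.factorial * b⁻¹ ^ k * Real.exp (b * t ^ 2) := by
    have hd := Real.pow_div_factorial_le_exp (x := b * t ^ 2) (by positivity) k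
    rw [div_le_iff₀ (by positivity : (0:ℝ) < (k.factorial : ℝ))] at hd
    have he : (t ^ 2) ^ k = b⁻¹ ^ k * (b * t ^ 2) ^ k := by
      rw [← mul_pow]; congr 1; field_simp
    rw [he]
    calc b⁻¹ ^ k * (b * t ^ 2) ^ k ≤ b⁻¹ ^ k * (Real.exp (b * t ^ 2) * k.factorial) :=
          mul_le_mul_of_nonneg_left hd (by positivity)
      _ = k.factorial * b⁻¹ ^ k * Real.exp (b * t ^ 2) := by ring
  calc t ^ k ≤ 1 + (t ^ 2) ^ k := h0
    _ ≤ 1 * Real.exp (b * t ^ 2) + k.factorial * b⁻¹ ^ k * Real.exp (b * t ^ 2) := by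
        refine add_le_add (by linarith) h2
    _ = (1 + k.factorial * b⁻¹ ^ k) * Real.exp (b * t ^ 2) := by ring

private lemma krih_mul_exp (k : ℕ) {c t : ℝ} (hc : 0 < c) (ht : 0 ≤ t) :
    t ^ k * Real.exp (-(c / 4) * t ^ 2) ≤
      (1 + k.factorial * (c / 8)⁻¹ ^ k) * Real.exp (-(c / 8) * t ^ 2) := by
  have h1 := krih_pow_le k (b := c / 8) (by positivity) ht
  have h2 : Real.exp (c / 8 * t ^ 2) * Real.exp (-(c / 4) * t ^ 2)
      = Real.exp (-(c / 8) * t ^ 2) := by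
    rw [← Real.exp_add]; ring_nf
  calc t ^ k * Real.exp (-(c / 4) * t ^ 2)
      ≤ (1 + k.factorial * (c / 8)⁻¹ ^ k) * Real.exp (c / 8 * t ^ 2) *
          Real.exp (-(c / 4) * t ^ 2) :=
        mul_le_mul_of_nonneg_right h1 (Real.exp_pos _).le
    _ = (1 + k.factorial * (c / 8)⁻¹ ^ k) * Real.exp (-(c / 8) * t ^ 2) := by
        rw [mul_assoc, h2]

private lemma krih_det_le {n : ℕ} (M : Matrix (Fin n) (Fin n) ℝ) {r : ℝ}
    (h : ∀ j k, |M j k| ≤ r) : |M.det| ≤ n.factorial * r ^ n := by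
  rw [Matrix.det_apply]
  calc |∑ σ : Equiv.Perm (Fin n), Equiv.Perm.sign σ • ∏ i, M (σ i) i|
      ≤ ∑ σ : Equiv.Perm (Fin n), |Equiv.Perm.sign σ • ∏ i, M (σ i) i| :=
        Finset.abs_sum_le_sum_abs _ _
    _ ≤ ∑ _σ : Equiv.Perm (Fin n), r ^ n := by
        refine Finset.sum_le_sum fun σ _ => ?_
        have habs : |Equiv.Perm.sign σ • ∏ i, M (σ i) i| = |∏ i, M (σ i) i| := by
          rcases Int.units_eq_one_or (Equiv.Perm.sign σ) with h1 | h1 <;> simp [h1]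
        rw [habs, Finset.abs_prod]
        calc ∏ i, |M (σ i) i| ≤ ∏ _i : Fin n, r :=
              Finset.prod_le_prod (fun _ _ => abs_nonneg _) (fun i _ => h _ _)
          _ = r ^ n := by simp
    _ = n.factorial * r ^ n := by
        rw [Finset.sum_const, Finset.card_univ, Fintype.card_perm, Fintype.card_fin,
          nsmul_eq_mul]

private lemma krih_gauss {ι : Type*} [Fintype ι] {b : ℝ} (hb : 0 < b) :
    Integrable (fun v : EuclideanSpace ℝ ι => Real.exp (-b * ‖v‖ ^ 2)) := by
  have h := (GaussianFourier.integrable_cexp_neg_mul_sq_norm_add_of_euclideanSpace (ι := ι)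
      (b := (b : ℂ)) (by simpa using hb) 0 0).norm
  refine h.congr (Filter.Eventually.of_forall fun v => ?_)
  simp [Complex.norm_exp]
  exact Or.inl (by rw [← Complex.ofReal_pow, Complex.ofReal_re])

private lemma krih_abs_le_norm {ι : Type*} [Fintype ι] (u : EuclideanSpace ℝ ι) (p : ι) :
    |u p| ≤ ‖u‖ := by
  have h1 : |u p| ≤ Real.sqrt (∑ i, ‖u i‖ ^ 2) := by
    rw [← Real.sqrt_sq (abs_nonneg (u p))]
    apply Real.sqrt_le_sqrt
    rw [sq_abs]
    exact Finset.single_le_sum (f := fun i => ‖u i‖ ^ 2) (fun i _ => sq_nonneg _)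
      (Finset.mem_univ p) |>.trans_eq' (by rw [Real.norm_eq_abs, sq_abs])
  rwa [EuclideanSpace.norm_eq]

private lemma krih_cont {ι : Type*} [Fintype ι] (M : Matrix ι ι ℝ) :
    Continuous fun u : EuclideanSpace ℝ ι => M.mulVec u ⬝ᵥ u := by
  have h : (fun u : EuclideanSpace ℝ ι => M.mulVec u ⬝ᵥ u) =
      fun u => ∑ j, (∑ k, M j k * u k) * u j := by
    funext u
    simp [Matrix.mulVec, dotProduct]
  rw [h]
  exact continuous_finset_sum _ fun j _ =>
    (continuous_finset_sum _ fun k _ =>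
      continuous_const.mul (EuclideanSpace.proj k).continuous).mul
      (EuclideanSpace.proj j).continuous

private lemma krih_coercive {ι : Type*} [Fintype ι] [DecidableEq ι] [Nonempty ι]
    (A : Matrix ι ι ℝ) (hA : A.PosDef) :
    ∃ c > 0, ∀ u : EuclideanSpace ℝ ι, c * ‖u‖ ^ 2 ≤ A.mulVec u ⬝ᵥ u := by
  classical
  set Q : EuclideanSpace ℝ ι → ℝ := fun u => A.mulVec u ⬝ᵥ u with hQdef
  have hQpos : ∀ u : EuclideanSpace ℝ ι, u ≠ 0 → 0 < Q u := by
    intro u hu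
    have h := hA.dotProduct_mulVec_pos (x := u.ofLp) (fun h0 => hu (by ext i; exact congrFun h0 i))
    simpa [hQdef, dotProduct_comm] using h
  have hsne : (Metric.sphere (0 : EuclideanSpace ℝ ι) 1).Nonempty := by
    refine ⟨EuclideanSpace.single (Classical.arbitrary ι) 1, ?_⟩
    simp [EuclideanSpace.norm_single]
  obtain ⟨x₀, hx₀mem, hmin⟩ := (isCompact_sphere (0 : EuclideanSpace ℝ ι) 1).exists_isMinOn
    hsne (krih_cont A).continuousOn
  have hx₀norm : ‖x₀‖ = 1 := by simpa using mem_sphere_zero_iff_norm.mp hx₀mem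
  have hx₀ne : x₀ ≠ 0 := by intro h; rw [h] at hx₀norm; simp at hx₀norm
  refine ⟨Q x₀, hQpos _ hx₀ne, fun u => ?_⟩
  rcases eq_or_ne u 0 with rfl | hu
  · simp [hQdef, dotProduct_zero]
  · have ht : (0:ℝ) < ‖u‖ := norm_pos_iff.mpr hu
    set t : ℝ := ‖u‖
    have hv : (t⁻¹ • u) ∈ Metric.sphere (0 : EuclideanSpace ℝ ι) 1 := by
      rw [mem_sphere_zero_iff_norm, norm_smul, Real.norm_eq_abs, abs_inv,
        abs_of_pos ht]
      exact inv_mul_cancel₀ ht.ne'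
    have hle : Q x₀ ≤ Q (t⁻¹ • u) := hmin hv
    have hQv : Q (t⁻¹ • u) = t⁻¹ * (t⁻¹ * Q u) := by
      simp only [hQdef]
      rw [WithLp.ofLp_smul, Matrix.mulVec_smul, smul_dotProduct, dotProduct_smul]
      simp [smul_eq_mul, mul_assoc]
    rw [hQv] at hle
    have h2 : Q x₀ * t ^ 2 ≤ Q u := by
      have := mul_le_mul_of_nonneg_right hle (le_of_lt (mul_pos ht ht))
      field_simp at this
      nlinarith [this]
    calc Q x₀ * ‖u‖ ^ 2 = Q x₀ * t ^ 2 := rfl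
      _ ≤ Q u := h2

private lemma krih_quad_diff {ι : Type*} [Fintype ι] (A B : Matrix ι ι ℝ) {δ : ℝ}
    (hδ : 0 ≤ δ) (h : ∀ j k, |A j k - B j k| ≤ δ) (u : EuclideanSpace ℝ ι) :
    |A.mulVec u ⬝ᵥ u - B.mulVec u ⬝ᵥ u| ≤ δ * Fintype.card ι * ‖u‖ ^ 2 := by
  have he : A.mulVec u ⬝ᵥ u - B.mulVec u ⬝ᵥ u
      = ∑ j, ∑ k, (A j k - B j k) * (u k * u j) := by
    simp only [Matrix.mulVec, dotProduct]
    rw [← Finset.sum_sub_distrib]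
    refine Finset.sum_congr rfl fun j _ => ?_
    rw [← sub_mul, ← Finset.sum_sub_distrib, Finset.sum_mul]
    refine Finset.sum_congr rfl fun k _ => ?_
    ring
  have hsum : (∑ i, |u i|) ^ 2 ≤ (Fintype.card ι : ℝ) * ‖u‖ ^ 2 := by
    have h1 := sq_sum_le_card_mul_sum_sq (s := (Finset.univ : Finset ι)) (f := fun i => |u i|)
    have h2 : ‖u‖ ^ 2 = ∑ i, |u i| ^ 2 := by
      rw [EuclideanSpace.norm_eq, Real.sq_sqrt (by positivity)]
      simp [sq_abs]
    rw [h2]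
    simpa [Finset.card_univ] using h1
  calc |A.mulVec u ⬝ᵥ u - B.mulVec u ⬝ᵥ u|
      ≤ ∑ j, ∑ k, |A j k - B j k| * (|u k| * |u j|) := by
        rw [he]
        refine (Finset.abs_sum_le_sum_abs _ _).trans (Finset.sum_le_sum fun j _ =>
          (Finset.abs_sum_le_sum_abs _ _).trans (Finset.sum_le_sum fun k _ => ?_))
        rw [abs_mul, abs_mul]
    _ ≤ ∑ j, ∑ k, δ * (|u k| * |u j|) := by
        refine Finset.sum_le_sum fun j _ => Finset.sum_le_sum fun k _ =>
          mul_le_mul_of_nonneg_right (h j k) (by positivity)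
    _ = δ * (∑ i, |u i|) ^ 2 := by
        rw [sq, Finset.sum_mul_sum, Finset.mul_sum]
        rw [Finset.sum_comm]
        simp [Finset.mul_sum]
    _ ≤ δ * ((Fintype.card ι : ℝ) * ‖u‖ ^ 2) := mul_le_mul_of_nonneg_left hsum hδ
    _ = δ * Fintype.card ι * ‖u‖ ^ 2 := by ring

set_option maxHeartbeats 1600000 in
/-- Hölder-`1/2` continuity of the Kac–Rice integral in the matrix of the quadratic form:
for a positive definite `A`, there are constants `C` and `ε > 0` such that whenever all
entries of `B` differ from those of `A` by at most `δ ≤ ε`, the two integrals differ by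
at most `C √δ`. -/
theorem kac_rice_integral_holder (m n : ℕ) (hm : 1 ≤ m) (hn : 1 ≤ n)
    (A : Matrix (Fin m × Fin n × Fin n) (Fin m × Fin n × Fin n) ℝ) (hA : A.PosDef) :
    ∃ C : ℝ, ∃ ε > (0 : ℝ),
      ∀ B : Matrix (Fin m × Fin n × Fin n) (Fin m × Fin n × Fin n) ℝ, ∀ δ : ℝ,
        0 ≤ δ → δ ≤ ε → (∀ j k, |A j k - B j k| ≤ δ) →
        |(∫ u : EuclideanSpace ℝ (Fin m × Fin n × Fin n),
              (∏ i : Fin m, |(Matrix.of fun j k => u (i, j, k)).det|) *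
                exp (-(B.mulVec u ⬝ᵥ u) / 2)) -
            ∫ u : EuclideanSpace ℝ (Fin m × Fin n × Fin n),
              (∏ i : Fin m, |(Matrix.of fun j k => u (i, j, k)).det|) *
                exp (-(A.mulVec u ⬝ᵥ u) / 2)| ≤ C * Real.sqrt δ := by
  classical
  have hιne : Nonempty (Fin m × Fin n × Fin n) := ⟨(⟨0, hm⟩, ⟨0, hn⟩, ⟨0, hn⟩)⟩
  obtain ⟨c, hc, hcoer⟩ := krih_coercive A hA
  set N : ℝ := (Fintype.card (Fin m × Fin n × Fin n) : ℝ) with hNdef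
  have hN0 : 0 < N := by
    rw [hNdef]
    exact_mod_cast Fintype.card_pos (α := Fin m × Fin n × Fin n)
  set ε : ℝ := c / (2 * N) with hεdef
  have hε0 : 0 < ε := by positivity
  set M1 : ℝ := 1 + (m * n).factorial * (c / 8)⁻¹ ^ (m * n) with hM1def
  set M2 : ℝ := 1 + (m * n + 2).factorial * (c / 8)⁻¹ ^ (m * n + 2) with hM2def
  have hM10 : 0 ≤ M1 := by positivity
  have hM20 : 0 ≤ M2 := by positivity
  have hgint : Integrable (fun u : EuclideanSpace ℝ (Fin m × Fin n × Fin n) =>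
      Real.exp (-(c / 8) * ‖u‖ ^ 2)) := krih_gauss (by positivity)
  set I : ℝ := ∫ u : EuclideanSpace ℝ (Fin m × Fin n × Fin n),
      Real.exp (-(c / 8) * ‖u‖ ^ 2) with hIdef
  have hI0 : 0 ≤ I := integral_nonneg fun u => (Real.exp_pos _).le
  set K : ℝ := N * ((n.factorial : ℝ)) ^ m * M2 / 2 with hKdef
  have hK0 : 0 ≤ K := by positivity
  -- bound on the product of determinants
  have hPnn : ∀ u : EuclideanSpace ℝ (Fin m × Fin n × Fin n),
      0 ≤ ∏ i : Fin m, |(Matrix.of fun j k => u (i, j, k)).det| :=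
    fun u => Finset.prod_nonneg fun i _ => abs_nonneg _
  have hPle : ∀ u : EuclideanSpace ℝ (Fin m × Fin n × Fin n),
      (∏ i : Fin m, |(Matrix.of fun j k => u (i, j, k)).det|)
        ≤ ((n.factorial : ℝ)) ^ m * ‖u‖ ^ (m * n) := by
    intro u
    calc (∏ i : Fin m, |(Matrix.of fun j k => u (i, j, k)).det|)
        ≤ ∏ _i : Fin m, (n.factorial : ℝ) * ‖u‖ ^ n := by
          refine Finset.prod_le_prod (fun i _ => abs_nonneg _) (fun i _ => ?_)
          exact krih_det_le _ (fun j k => krih_abs_le_norm u (i, j, k))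
      _ = ((n.factorial : ℝ)) ^ m * ‖u‖ ^ (m * n) := by
          rw [Finset.prod_const, Finset.card_univ, Fintype.card_fin, mul_pow, ← pow_mul,
            Nat.mul_comm n m]
  -- continuity of the integrands
  have hcontf : ∀ D : Matrix (Fin m × Fin n × Fin n) (Fin m × Fin n × Fin n) ℝ,
      Continuous (fun u : EuclideanSpace ℝ (Fin m × Fin n × Fin n) =>
        (∏ i : Fin m, |(Matrix.of fun j k => u (i, j, k)).det|) *
          Real.exp (-(D.mulVec u ⬝ᵥ u) / 2)) := by
    intro D
    refine Continuous.mul ?_ ?_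
    · exact continuous_finset_prod _ fun i _ =>
        (Continuous.matrix_det (continuous_matrix fun j k =>
          (EuclideanSpace.proj ((i, j, k) : Fin m × Fin n × Fin n)).continuous)).abs
    · exact Real.continuous_exp.comp ((krih_cont D).neg.div_const 2)
  -- integrability
  have hint : ∀ D : Matrix (Fin m × Fin n × Fin n) (Fin m × Fin n × Fin n) ℝ,
      (∀ u : EuclideanSpace ℝ (Fin m × Fin n × Fin n),
        c / 2 * ‖u‖ ^ 2 ≤ D.mulVec u ⬝ᵥ u) →
      Integrable (fun u : EuclideanSpace ℝ (Fin m × Fin n × Fin n) =>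
        (∏ i : Fin m, |(Matrix.of fun j k => u (i, j, k)).det|) *
          Real.exp (-(D.mulVec u ⬝ᵥ u) / 2)) := by
    intro D hD
    refine (hgint.const_mul (((n.factorial : ℝ)) ^ m * M1)).mono'
      (hcontf D).aestronglyMeasurable (Filter.Eventually.of_forall fun u => ?_)
    have hexple : Real.exp (-(D.mulVec u ⬝ᵥ u) / 2) ≤ Real.exp (-(c / 4) * ‖u‖ ^ 2) := by
      apply Real.exp_le_exp.2
      have := hD u
      nlinarith [sq_nonneg ‖u‖]
    have h1 : ‖(∏ i : Fin m, |(Matrix.of fun j k => u (i, j, k)).det|) *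
        Real.exp (-(D.mulVec u ⬝ᵥ u) / 2)‖
        = (∏ i : Fin m, |(Matrix.of fun j k => u (i, j, k)).det|) *
            Real.exp (-(D.mulVec u ⬝ᵥ u) / 2) := by
      rw [Real.norm_eq_abs, abs_of_nonneg (mul_nonneg (hPnn u) (Real.exp_pos _).le)]
    rw [h1]
    calc (∏ i : Fin m, |(Matrix.of fun j k => u (i, j, k)).det|) *
          Real.exp (-(D.mulVec u ⬝ᵥ u) / 2)
        ≤ (((n.factorial : ℝ)) ^ m * ‖u‖ ^ (m * n)) * Real.exp (-(c / 4) * ‖u‖ ^ 2) :=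
          mul_le_mul (hPle u) hexple (Real.exp_pos _).le (by positivity)
      _ = ((n.factorial : ℝ)) ^ m * (‖u‖ ^ (m * n) * Real.exp (-(c / 4) * ‖u‖ ^ 2)) := by
          ring
      _ ≤ ((n.factorial : ℝ)) ^ m * (M1 * Real.exp (-(c / 8) * ‖u‖ ^ 2)) := by
          refine mul_le_mul_of_nonneg_left ?_ (by positivity)
          simpa [hM1def] using krih_mul_exp (m * n) hc (norm_nonneg u)
      _ = ((n.factorial : ℝ)) ^ m * M1 * Real.exp (-(c / 8) * ‖u‖ ^ 2) := by ring
  refine ⟨Real.sqrt ε * (K * I), ε, hε0, fun B δ hδ0 hδε hAB => ?_⟩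
  -- coercivity for A and B
  have hQA : ∀ u : EuclideanSpace ℝ (Fin m × Fin n × Fin n),
      c / 2 * ‖u‖ ^ 2 ≤ A.mulVec u ⬝ᵥ u := by
    intro u
    refine le_trans ?_ (hcoer u)
    nlinarith [sq_nonneg ‖u‖]
  have hδN : δ * N ≤ c / 2 := by
    have h1 : δ * N ≤ ε * N := mul_le_mul_of_nonneg_right hδε hN0.le
    have h2 : ε * N = c / 2 := by
      rw [hεdef]; field_simp
    linarith
  have hQB : ∀ u : EuclideanSpace ℝ (Fin m × Fin n × Fin n),
      c / 2 * ‖u‖ ^ 2 ≤ B.mulVec u ⬝ᵥ u := by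
    intro u
    have hd := krih_quad_diff A B hδ0 hAB u
    have h1 : A.mulVec u ⬝ᵥ u - B.mulVec u ⬝ᵥ u ≤ δ * N * ‖u‖ ^ 2 :=
      (le_abs_self _).trans hd
    have h2 : δ * N * ‖u‖ ^ 2 ≤ c / 2 * ‖u‖ ^ 2 :=
      mul_le_mul_of_nonneg_right hδN (sq_nonneg _)
    have h3 := hcoer u
    nlinarith [sq_nonneg ‖u‖]
  set fB : EuclideanSpace ℝ (Fin m × Fin n × Fin n) → ℝ := fun u =>
      (∏ i : Fin m, |(Matrix.of fun j k => u (i, j, k)).det|) *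
        Real.exp (-(B.mulVec u ⬝ᵥ u) / 2) with hfBdef
  set fA : EuclideanSpace ℝ (Fin m × Fin n × Fin n) → ℝ := fun u =>
      (∏ i : Fin m, |(Matrix.of fun j k => u (i, j, k)).det|) *
        Real.exp (-(A.mulVec u ⬝ᵥ u) / 2) with hfAdef
  have hintA : Integrable fA := by rw [hfAdef]; exact hint A hQA
  have hintB : Integrable fB := by rw [hfBdef]; exact hint B hQB
  -- pointwise bound on the difference
  have hdiff : ∀ u : EuclideanSpace ℝ (Fin m × Fin n × Fin n),
      |fB u - fA u| ≤ δ * K * Real.exp (-(c / 8) * ‖u‖ ^ 2) := by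
    intro u
    simp only [hfBdef, hfAdef]
    set QA : ℝ := A.mulVec u ⬝ᵥ u
    set QB : ℝ := B.mulVec u ⬝ᵥ u
    set P : ℝ := ∏ i : Fin m, |(Matrix.of fun j k => u (i, j, k)).det| with hPdef
    have hexpd : |Real.exp (-QB / 2) - Real.exp (-QA / 2)|
        ≤ |QB / 2 - QA / 2| * Real.exp (-(c / 4 * ‖u‖ ^ 2)) := by
      have e1 : -QB / 2 = -(QB / 2) := by ring
      have e2 : -QA / 2 = -(QA / 2) := by ring
      rw [e1, e2]
      exact krih_exp_diff (by nlinarith [hQB u]) (by nlinarith [hQA u])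
    have habsq : |QB / 2 - QA / 2| ≤ δ * N * ‖u‖ ^ 2 / 2 := by
      have h9 : |QB / 2 - QA / 2| = |QA - QB| / 2 := by
        rw [abs_sub_comm, show QA / 2 - QB / 2 = (QA - QB) / 2 from by ring, abs_div, abs_two]
      rw [h9]
      have := krih_quad_diff A B hδ0 hAB u
      linarith
    calc |P * Real.exp (-QB / 2) - P * Real.exp (-QA / 2)|
        = P * |Real.exp (-QB / 2) - Real.exp (-QA / 2)| := by
          rw [← mul_sub, abs_mul, abs_of_nonneg (by rw [hPdef]; exact hPnn u)]
      _ ≤ (((n.factorial : ℝ)) ^ m * ‖u‖ ^ (m * n)) *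
            (δ * N * ‖u‖ ^ 2 / 2 * Real.exp (-(c / 4 * ‖u‖ ^ 2))) := by
          refine mul_le_mul ?_ ?_ (abs_nonneg _) (by positivity)
          · rw [hPdef]; exact hPle u
          · exact hexpd.trans (mul_le_mul_of_nonneg_right habsq (Real.exp_pos _).le)
      _ = δ * N * ((n.factorial : ℝ)) ^ m / 2 *
            (‖u‖ ^ (m * n + 2) * Real.exp (-(c / 4) * ‖u‖ ^ 2)) := by
          rw [pow_add]
          ring_nf
      _ ≤ δ * N * ((n.factorial : ℝ)) ^ m / 2 *
            (M2 * Real.exp (-(c / 8) * ‖u‖ ^ 2)) := by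
          refine mul_le_mul_of_nonneg_left ?_ (by positivity)
          simpa [hM2def] using krih_mul_exp (m * n + 2) hc (norm_nonneg u)
      _ = δ * K * Real.exp (-(c / 8) * ‖u‖ ^ 2) := by
          rw [hKdef]; ring
  -- main estimate
  rw [← integral_sub hintB hintA]
  calc |∫ u : EuclideanSpace ℝ (Fin m × Fin n × Fin n), (fB u - fA u)|
      ≤ ∫ u : EuclideanSpace ℝ (Fin m × Fin n × Fin n), |fB u - fA u| := by
        simpa [Real.norm_eq_abs] using
          norm_integral_le_integral_norm
            (μ := (volume : Measure (EuclideanSpace ℝ (Fin m × Fin n × Fin n))))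
            (f := fun u => fB u - fA u)
    _ ≤ ∫ u : EuclideanSpace ℝ (Fin m × Fin n × Fin n),
          δ * K * Real.exp (-(c / 8) * ‖u‖ ^ 2) :=
        integral_mono (hintB.sub hintA).abs (hgint.const_mul (δ * K)) hdiff
    _ = δ * K * I := by
        rw [integral_const_mul]
    _ ≤ Real.sqrt ε * (K * I) * Real.sqrt δ := by
        have hδle : δ ≤ Real.sqrt ε * Real.sqrt δ := by
          nth_rewrite 1 [← Real.mul_self_sqrt hδ0]
          exact mul_le_mul_of_nonneg_right (Real.sqrt_le_sqrt hδε) (Real.sqrt_nonneg δ)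
        calc δ * K * I = δ * (K * I) := by ring
          _ ≤ Real.sqrt ε * Real.sqrt δ * (K * I) :=
              mul_le_mul_of_nonneg_right hδle (mul_nonneg hK0 hI0)
          _ = Real.sqrt ε * (K * I) * Real.sqrt δ := by ring
end
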